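/- Let G = (V,E) be a finite simple graph on n ≥ 2 vertices that is λ-edge-connected for some integer λ ≥ 1. Let p ∈ [0,1] satisfy p ≥ (20 log₂ n)/λ, and choose a random subset S ⊆ E by including each edge of E in S independently with probability p. Then the spanning subgraph G' = (V,S) is connected with probability at least 1 − 1/n. -/

import Mathlib

open Classical

noncomputable section

/-- The edge set of `G` as a `Finset` of `Sym2 V`. -/
def edgeFin {V : Type*} [Fintype V] (G : SimpleGraph V) : Finset (Sym2 V) :=
  Finset.univ.filter (fun e => e ∈ G.edgeSet)

/-- The set of edges of `G` with exactly one endpoint in `S` (the cut `(S, V ∖ S)`). -/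
def cutEdges {V : Type*} [Fintype V] (G : SimpleGraph V) (S : Finset V) : Finset (Sym2 V) :=
  Finset.univ.filter (fun e => e ∈ G.edgeSet ∧ ∃ u v, e = s(u, v) ∧ u ∈ S ∧ v ∉ S)

/-- The probability, under independent `Bernoulli(p)` sampling of each element of the
ground set `E`, that the sampled subset satisfies `Q`. -/
def cubePr {β : Type*} [DecidableEq β] (E : Finset β) (p : ℝ) (Q : Finset β → Prop) : ℝ :=
  ∑ S ∈ E.powerset, p ^ S.card * (1 - p) ^ (E.card - S.card) * (if Q S then 1 else 0)

/-- `C` is (the vertex set of) a connected component of `H`. -/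
def IsCompOf {V : Type*} [Fintype V] (H : SimpleGraph V) (C : Finset V) : Prop :=
  ∃ v : V, C = Finset.univ.filter (fun u => H.Reachable v u)

section KargerAuxDev

open Finset

set_option maxHeartbeats 1600000

namespace KargerAux

variable {β : Type*}

def cubeW (E : Finset β) (p : ℝ) (S : Finset β) : ℝ :=
  p ^ S.card * (1 - p) ^ (E.card - S.card)

def cubeE (E : Finset β) (p : ℝ) (g : Finset β → ℝ) : ℝ :=
  ∑ S ∈ E.powerset, cubeW E p S * g S

lemma cubeE_insert [DecidableEq β] {a : β} {E : Finset β} (ha : a ∉ E) (p : ℝ)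
    (g : Finset β → ℝ) :
    cubeE (insert a E) p g
      = p * cubeE E p (fun S => g (insert a S)) + (1 - p) * cubeE E p g := by
  classical
  unfold cubeE
  rw [Finset.powerset_insert, Finset.sum_union, Finset.sum_image]
  · have h1 : ∀ S ∈ E.powerset, cubeW (insert a E) p (insert a S) * g (insert a S)
        = p * (cubeW E p S * g (insert a S)) := by
      intro S hS
      rw [Finset.mem_powerset] at hS
      have haS : a ∉ S := fun h => ha (hS h)
      have hcard : S.card ≤ E.card := Finset.card_le_card hS
      unfold cubeW
      rw [Finset.card_insert_of_notMem haS, Finset.card_insert_of_notMem ha]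
      have : E.card + 1 - (S.card + 1) = E.card - S.card := by omega
      rw [this, pow_succ]
      ring
    have h2 : ∀ S ∈ E.powerset, cubeW (insert a E) p S * g S
        = (1 - p) * (cubeW E p S * g S) := by
      intro S hS
      rw [Finset.mem_powerset] at hS
      have hcard : S.card ≤ E.card := Finset.card_le_card hS
      unfold cubeW
      rw [Finset.card_insert_of_notMem ha]
      have : E.card + 1 - S.card = (E.card - S.card) + 1 := by omega
      rw [this, pow_succ]
      ring
    rw [Finset.sum_congr rfl h1, Finset.sum_congr rfl h2, ← Finset.mul_sum, ← Finset.mul_sum]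
    ring
  · intro S hS S' hS' hE
    rw [Finset.mem_coe, Finset.mem_powerset] at hS hS'
    have : ∀ T : Finset β, T ⊆ E → (insert a T).erase a = T := by
      intro T hT
      rw [Finset.erase_insert (fun h => ha (hT h))]
    rw [← this S hS, ← this S' hS', hE]
  · rw [Finset.disjoint_right]
    intro S hS hS2
    rw [Finset.mem_image] at hS
    obtain ⟨T, _, rfl⟩ := hS
    rw [Finset.mem_powerset] at hS2
    exact ha (hS2 (Finset.mem_insert_self a T))

lemma cubeE_const (E : Finset β) (p : ℝ) (c : ℝ) :
    cubeE E p (fun _ => c) = c := by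
  classical
  induction E using Finset.induction with
  | empty =>
    unfold cubeE cubeW
    simp
  | insert _ _ ha ih =>
    rw [cubeE_insert ha]
    rw [ih]
    ring

lemma cubeE_add (E : Finset β) (p : ℝ) (g h : Finset β → ℝ) :
    cubeE E p (fun S => g S + h S) = cubeE E p g + cubeE E p h := by
  unfold cubeE
  rw [← Finset.sum_add_distrib]
  exact Finset.sum_congr rfl fun S _ => by ring

lemma cubeE_smul (E : Finset β) (p : ℝ) (c : ℝ) (g : Finset β → ℝ) :
    cubeE E p (fun S => c * g S) = c * cubeE E p g := by
  unfold cubeE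
  rw [Finset.mul_sum]
  exact Finset.sum_congr rfl fun S _ => by ring

lemma cubeE_sub (E : Finset β) (p : ℝ) (g h : Finset β → ℝ) :
    cubeE E p (fun S => g S - h S) = cubeE E p g - cubeE E p h := by
  unfold cubeE
  rw [← Finset.sum_sub_distrib]
  exact Finset.sum_congr rfl fun S _ => by ring

lemma cubeW_nonneg {E : Finset β} {p : ℝ} (hp0 : 0 ≤ p) (hp1 : p ≤ 1) (S : Finset β) :
    0 ≤ cubeW E p S :=
  mul_nonneg (pow_nonneg hp0 _) (pow_nonneg (by linarith) _)

lemma cubeE_mono {E : Finset β} {p : ℝ} (hp0 : 0 ≤ p) (hp1 : p ≤ 1) {g h : Finset β → ℝ}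
    (hgh : ∀ S ∈ E.powerset, g S ≤ h S) : cubeE E p g ≤ cubeE E p h :=
  Finset.sum_le_sum fun S hS =>
    mul_le_mul_of_nonneg_left (hgh S hS) (cubeW_nonneg hp0 hp1 S)

lemma cubeE_sum {ι : Type*} (E : Finset β) (p : ℝ) (I : Finset ι) (f : ι → Finset β → ℝ) :
    cubeE E p (fun S => ∑ i ∈ I, f i S) = ∑ i ∈ I, cubeE E p (f i) := by
  unfold cubeE
  rw [Finset.sum_comm]
  exact Finset.sum_congr rfl fun S _ => by rw [Finset.mul_sum]

lemma cubeE_zero_p (E : Finset β) (g : Finset β → ℝ) : cubeE E 0 g = g ∅ := by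
  classical
  unfold cubeE
  rw [Finset.sum_eq_single (∅ : Finset β)]
  · unfold cubeW; simp
  · intro S hS hne
    unfold cubeW
    have : 0 < S.card := Finset.card_pos.mpr (Finset.nonempty_of_ne_empty hne)
    rw [zero_pow (by omega)]
    ring
  · intro h
    exact absurd (Finset.empty_mem_powerset E) h


lemma cubeE_congr {E : Finset β} {p : ℝ} {g h : Finset β → ℝ}
    (hgh : ∀ S ∈ E.powerset, g S = h S) : cubeE E p g = cubeE E p h := by
  unfold cubeE
  exact Finset.sum_congr rfl fun S hS => by rw [hgh S hS]

lemma cubeE_restrict_aux [DecidableEq β] (p : ℝ) :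
    ∀ (E : Finset β) (g : Finset β → ℝ), ∀ D ⊆ E, cubeE E p (fun S => g (S ∩ D)) = cubeE D p g := by
  intro E
  induction E using Finset.induction with
  | empty =>
    intro g D hD
    rw [Finset.subset_empty.mp hD]
    unfold cubeE cubeW
    simp
  | @insert a E' ha ih =>
    intro g D hD
    by_cases haD : a ∈ D
    · have hD' : D.erase a ⊆ E' := by
        intro x hx
        rcases Finset.mem_insert.mp (hD (Finset.mem_of_mem_erase hx)) with h | h
        · exact absurd h (Finset.ne_of_mem_erase hx)
        · exact h
      have hDins : D = insert a (D.erase a) := (Finset.insert_erase haD).symm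
      rw [cubeE_insert ha]
      conv_rhs => rw [hDins]
      rw [cubeE_insert (Finset.notMem_erase a D)]
      have e1 : cubeE E' p (fun S => g ((insert a S) ∩ D))
          = cubeE (D.erase a) p (fun S => g (insert a S)) := by
        rw [← ih (fun T => g (insert a T)) (D.erase a) hD']
        apply cubeE_congr
        intro S hS
        rw [Finset.mem_powerset] at hS
        congr 1
        ext x
        simp only [Finset.mem_inter, Finset.mem_insert, Finset.mem_erase]
        constructor
        · rintro ⟨h1 | h1, h2⟩
          · exact Or.inl h1
          · by_cases hxa : x = a
            · exact Or.inl hxa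
            · exact Or.inr ⟨h1, hxa, h2⟩
        · rintro (h1 | ⟨h1, _, h2⟩)
          · exact ⟨Or.inl h1, h1 ▸ haD⟩
          · exact ⟨Or.inr h1, h2⟩
      have e2 : cubeE E' p (fun S => g (S ∩ D)) = cubeE (D.erase a) p g := by
        rw [← ih g (D.erase a) hD']
        apply cubeE_congr
        intro S hS
        rw [Finset.mem_powerset] at hS
        congr 1
        ext x
        simp only [Finset.mem_inter, Finset.mem_erase]
        constructor
        · rintro ⟨h1, h2⟩
          exact ⟨h1, fun hxa => ha (hxa ▸ hS h1), h2⟩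
        · rintro ⟨h1, _, h2⟩
          exact ⟨h1, h2⟩
      rw [e1, e2]
    · have hD' : D ⊆ E' := fun x hx => by
        rcases Finset.mem_insert.mp (hD hx) with h | h
        · exact absurd (h ▸ hx) haD
        · exact h
      rw [cubeE_insert ha]
      have e1 : cubeE E' p (fun S => g ((insert a S) ∩ D)) = cubeE D p g := by
        rw [← ih g D hD']
        apply cubeE_congr
        intro S hS
        congr 1
        ext x
        simp only [Finset.mem_inter, Finset.mem_insert]
        constructor
        · rintro ⟨h1 | h1, h2⟩
          · exact absurd (h1 ▸ h2) haD
          · exact ⟨h1, h2⟩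
        · rintro ⟨h1, h2⟩
          exact ⟨Or.inr h1, h2⟩
      rw [e1, ih g D hD']
      ring

lemma cubeE_restrict [DecidableEq β] (p : ℝ) (g : Finset β → ℝ) {E D : Finset β}
    (hD : D ⊆ E) : cubeE E p (fun S => g (S ∩ D)) = cubeE D p g :=
  cubeE_restrict_aux p E g D hD

lemma cubeE_miss [DecidableEq β] (p : ℝ) {E D : Finset β} (hD : D ⊆ E) :
    cubeE E p (fun S => if S ∩ D = ∅ then (1 : ℝ) else 0) = (1 - p) ^ D.card := by
  have := cubeE_restrict p (fun T => if T = ∅ then (1 : ℝ) else 0) hD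
  rw [this]
  unfold cubeE
  rw [Finset.sum_eq_single (∅ : Finset β)]
  · unfold cubeW; simp
  · intro S hS hne
    simp [hne]
  · intro h
    exact absurd (Finset.empty_mem_powerset D) h

lemma cubeE_compose [DecidableEq β] (p1 p2 : ℝ) :
    ∀ (E : Finset β) (g : Finset β → ℝ), cubeE E (p1 + p2 - p1 * p2) g
      = cubeE E p1 (fun S1 => cubeE E p2 (fun S2 => g (S1 ∪ S2))) := by
  intro E
  induction E using Finset.induction with
  | empty =>
    intro g
    unfold cubeE cubeW
    simp
  | @insert a E' ha ih =>
    intro g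
    have key1 : cubeE E' p1 (fun S1 => cubeE E' p2 (fun S2 => g (insert a (S1 ∪ S2))))
        = cubeE E' (p1 + p2 - p1 * p2) (fun T => g (insert a T)) :=
      (ih (fun T => g (insert a T))).symm
    have key2 : cubeE E' p1 (fun S1 => cubeE E' p2 (fun S2 => g (S1 ∪ S2)))
        = cubeE E' (p1 + p2 - p1 * p2) g := (ih g).symm
    rw [cubeE_insert ha, cubeE_insert ha]
    have e1 : cubeE E' p1 (fun S1 => cubeE (insert a E') p2 (fun S2 => g (insert a S1 ∪ S2)))
        = cubeE E' (p1 + p2 - p1 * p2) (fun T => g (insert a T)) := by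
      have h : ∀ S1 ∈ E'.powerset, cubeE (insert a E') p2 (fun S2 => g (insert a S1 ∪ S2))
          = cubeE E' p2 (fun S2 => g (insert a (S1 ∪ S2))) := by
        intro S1 _
        rw [cubeE_insert ha]
        have h1 : (fun S2 => g (insert a S1 ∪ insert a S2))
            = fun S2 => g (insert a (S1 ∪ S2)) := by
          funext S2
          rw [Finset.insert_union, Finset.union_insert, Finset.insert_idem]
        have h2 : (fun S2 : Finset β => g (insert a S1 ∪ S2))
            = fun S2 => g (insert a (S1 ∪ S2)) := by
          funext S2
          rw [Finset.insert_union]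
        rw [h1, h2]
        ring
      rw [cubeE_congr h, key1]
    have e2 : cubeE E' p1 (fun S1 => cubeE (insert a E') p2 (fun S2 => g (S1 ∪ S2)))
        = p2 * cubeE E' (p1 + p2 - p1 * p2) (fun T => g (insert a T))
          + (1 - p2) * cubeE E' (p1 + p2 - p1 * p2) g := by
      have h : ∀ S1 ∈ E'.powerset, cubeE (insert a E') p2 (fun S2 => g (S1 ∪ S2))
          = p2 * cubeE E' p2 (fun S2 => g (insert a (S1 ∪ S2)))
            + (1 - p2) * cubeE E' p2 (fun S2 => g (S1 ∪ S2)) := by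
        intro S1 _
        rw [cubeE_insert ha]
        have h1 : (fun S2 => g (S1 ∪ insert a S2))
            = fun S2 => g (insert a (S1 ∪ S2)) := by
          funext S2
          rw [Finset.union_insert]
        rw [h1]
      rw [cubeE_congr h,
        cubeE_add E' p1 (fun S1 => p2 * cubeE E' p2 (fun S2 => g (insert a (S1 ∪ S2))))
          (fun S1 => (1 - p2) * cubeE E' p2 (fun S2 => g (S1 ∪ S2))),
        cubeE_smul E' p1 p2 (fun S1 => cubeE E' p2 (fun S2 => g (insert a (S1 ∪ S2)))),
        cubeE_smul E' p1 (1 - p2) (fun S1 => cubeE E' p2 (fun S2 => g (S1 ∪ S2))),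
        key1, key2]
    rw [e1, e2]
    ring


section Graph

variable {V : Type*} [Fintype V]

def gr (A : Finset (Sym2 V)) : SimpleGraph V :=
  SimpleGraph.fromEdgeSet (↑A : Set (Sym2 V))

noncomputable instance (H : SimpleGraph V) : Fintype H.ConnectedComponent :=
  Fintype.ofFinite _

def suppF (A : Finset (Sym2 V)) (K : (gr A).ConnectedComponent) : Finset V :=
  Finset.univ.filter (fun v => (gr A).connectedComponentMk v = K)

lemma comb (G : SimpleGraph V) (A S : Finset (Sym2 V)) :
    2 * Fintype.card (gr (A ∪ S)).ConnectedComponent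
      + (Finset.univ.filter (fun K : (gr A).ConnectedComponent =>
          (cutEdges G (suppF A K) ∩ S).Nonempty)).card
    ≤ 2 * Fintype.card (gr A).ConnectedComponent := by
  classical
  have hle : gr A ≤ gr (A ∪ S) := by
    apply SimpleGraph.fromEdgeSet_mono
    rw [Finset.coe_union]
    exact Set.subset_union_left
  set φ : (gr A).ConnectedComponent → (gr (A ∪ S)).ConnectedComponent :=
    SimpleGraph.ConnectedComponent.map (SimpleGraph.Hom.ofLE hle) with hφ
  have hφmk : ∀ v : V, φ ((gr A).connectedComponentMk v)
      = (gr (A ∪ S)).connectedComponentMk v := fun v => rfl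
  set T : Finset (gr A).ConnectedComponent :=
    Finset.univ.filter (fun K => (cutEdges G (suppF A K) ∩ S).Nonempty) with hT
  have hkey : ∀ K ∈ T, ∃ K', K' ≠ K ∧ φ K' = φ K := by
    intro K hK
    rw [hT, Finset.mem_filter] at hK
    obtain ⟨-, e, he⟩ := hK
    rw [Finset.mem_inter] at he
    obtain ⟨he1, he2⟩ := he
    rw [cutEdges, Finset.mem_filter] at he1
    obtain ⟨-, heG, u, w, rfl, hu, hw⟩ := he1
    rw [suppF, Finset.mem_filter] at hu hw
    have hu' : (gr A).connectedComponentMk u = K := hu.2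
    have hw' : ¬ (gr A).connectedComponentMk w = K := fun h => hw ⟨Finset.mem_univ w, h⟩
    have hne : u ≠ w := ((G.mem_edgeSet).mp heG).ne
    have hadj : (gr (A ∪ S)).Adj u w := by
      rw [gr, SimpleGraph.fromEdgeSet_adj]
      refine ⟨?_, hne⟩
      rw [Finset.coe_union]
      exact Or.inr he2
    refine ⟨(gr A).connectedComponentMk w, fun h => hw' h, ?_⟩
    rw [hφmk, ← hu', hφmk]
    exact (SimpleGraph.ConnectedComponent.sound hadj.reachable).symm
  have hcard1 : (Finset.univ : Finset (gr A).ConnectedComponent).card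
      = ∑ b : (gr (A ∪ S)).ConnectedComponent,
          (Finset.univ.filter (fun K => φ K = b)).card :=
    Finset.card_eq_sum_card_fiberwise (fun K _ => Finset.mem_univ _)
  have hcard2 : T.card = ∑ b : (gr (A ∪ S)).ConnectedComponent,
      (T.filter (fun K => φ K = b)).card :=
    Finset.card_eq_sum_card_fiberwise (fun K _ => Finset.mem_univ _)
  have hperb : ∀ b : (gr (A ∪ S)).ConnectedComponent,
      2 + (T.filter (fun K => φ K = b)).card
        ≤ 2 * (Finset.univ.filter (fun K => φ K = b)).card := by
    intro b
    have hTsub : T.filter (fun K => φ K = b) ⊆ Finset.univ.filter (fun K => φ K = b) :=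
      Finset.filter_subset_filter _ (Finset.subset_univ T)
    rcases (T.filter (fun K => φ K = b)).eq_empty_or_nonempty with hemp | ⟨K, hK⟩
    · have hFne : (Finset.univ.filter (fun K => φ K = b)).Nonempty := by
        obtain ⟨v, hv⟩ := Quot.exists_rep b
        refine ⟨(gr A).connectedComponentMk v, Finset.mem_filter.mpr ⟨Finset.mem_univ _, ?_⟩⟩
        rw [hφmk]
        exact hv
      rw [hemp, Finset.card_empty]
      have := Finset.card_pos.mpr hFne
      omega
    · rw [Finset.mem_filter] at hK
      obtain ⟨hKT, hKb⟩ := hK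
      obtain ⟨K', hK'ne, hK'φ⟩ := hkey K hKT
      have h2 : 1 < (Finset.univ.filter (fun K => φ K = b)).card := by
        apply Finset.one_lt_card.mpr
        exact ⟨K, Finset.mem_filter.mpr ⟨Finset.mem_univ _, hKb⟩,
          K', Finset.mem_filter.mpr ⟨Finset.mem_univ _, by rw [hK'φ, hKb]⟩,
          fun h => hK'ne h.symm⟩
      have h3 := Finset.card_le_card hTsub
      omega
  calc 2 * Fintype.card (gr (A ∪ S)).ConnectedComponent + T.card
      = ∑ b : (gr (A ∪ S)).ConnectedComponent,
          (2 + (T.filter (fun K => φ K = b)).card) := by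
        rw [Finset.sum_add_distrib, Finset.sum_const, ← hcard2, Finset.card_univ,
          smul_eq_mul, mul_comm]
    _ ≤ ∑ b : (gr (A ∪ S)).ConnectedComponent,
          2 * (Finset.univ.filter (fun K => φ K = b)).card :=
        Finset.sum_le_sum (fun b _ => hperb b)
    _ = 2 * Fintype.card (gr A).ConnectedComponent := by
        rw [← Finset.mul_sum, ← hcard1, Finset.card_univ]


def exc (A : Finset (Sym2 V)) : ℝ := (Fintype.card (gr A).ConnectedComponent : ℝ) - 1

lemma cc_pos [Nonempty V] (A : Finset (Sym2 V)) :
    1 ≤ Fintype.card (gr A).ConnectedComponent := by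
  have : Nonempty (gr A).ConnectedComponent :=
    ⟨(gr A).connectedComponentMk (Classical.arbitrary V)⟩
  exact Fintype.card_pos

lemma round_step [Nonempty V] (G : SimpleGraph V) (lam : ℕ)
    (hconn : ∀ S : Finset V, S.Nonempty → S ≠ Finset.univ → lam ≤ (cutEdges G S).card)
    {p' : ℝ} (hp'0 : 0 ≤ p') (hp'1 : p' ≤ 1) (A : Finset (Sym2 V)) :
    cubeE (edgeFin G) p' (fun S => exc (A ∪ S))
      ≤ (1 + (1 - p') ^ lam) / 2 * exc A := by
  classical
  set c := Fintype.card (gr A).ConnectedComponent with hc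
  set q := (1 - p') ^ lam with hqdef
  have hq0 : 0 ≤ q := pow_nonneg (by linarith) _
  have hq1 : q ≤ 1 := pow_le_one₀ (by linarith) (by linarith)
  by_cases hc1 : c ≤ 1
  · have hexcA : exc A = 0 := by
      have := cc_pos A
      rw [exc, ← hc]
      have hceq : c = 1 := by omega
      rw [hceq]
      norm_num
    have hzero : ∀ S : Finset (Sym2 V), exc (A ∪ S) = 0 := by
      intro S
      have h1 := comb G A S
      have h2 := cc_pos (A ∪ S)
      rw [exc]
      have hceq : Fintype.card (gr (A ∪ S)).ConnectedComponent = 1 := by omega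
      rw [hceq]
      norm_num
    rw [hexcA, mul_zero]
    rw [cubeE_congr (fun S _ => hzero S), cubeE_const]
  · have hc2 : 2 ≤ c := by omega
    set mR : Finset (Sym2 V) → ℝ := fun S =>
      ∑ K : (gr A).ConnectedComponent,
        (if (cutEdges G (suppF A K) ∩ S).Nonempty then (1 : ℝ) else 0) with hmRdef
    have hmR : ∀ S : Finset (Sym2 V),
        mR S = ((Finset.univ.filter (fun K : (gr A).ConnectedComponent =>
          (cutEdges G (suppF A K) ∩ S).Nonempty)).card : ℝ) := by
      intro S
      rw [hmRdef, Finset.card_filter]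
      push_cast
      rfl
    have hpoint : ∀ S ∈ (edgeFin G).powerset,
        exc (A ∪ S) ≤ ((c : ℝ) - 1) - (1/2) * mR S := by
      intro S _
      have h1 := comb G A S
      have h2 := cc_pos (A ∪ S)
      rw [exc, hmR S]
      rw [← hc] at h1
      have h1' : 2 * (Fintype.card (gr (A ∪ S)).ConnectedComponent : ℝ)
          + ((Finset.univ.filter (fun K : (gr A).ConnectedComponent =>
            (cutEdges G (suppF A K) ∩ S).Nonempty)).card : ℝ) ≤ 2 * (c : ℝ) := by
        exact_mod_cast h1
      linarith
    have step1 : cubeE (edgeFin G) p' (fun S => exc (A ∪ S))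
        ≤ cubeE (edgeFin G) p' (fun S => ((c : ℝ) - 1) - (1/2) * mR S) :=
      cubeE_mono hp'0 hp'1 hpoint
    have step2 : cubeE (edgeFin G) p' (fun S => ((c : ℝ) - 1) - (1/2) * mR S)
        = ((c : ℝ) - 1) - (1/2) * cubeE (edgeFin G) p' mR := by
      rw [cubeE_sub (edgeFin G) p' (fun _ => (c : ℝ) - 1) (fun S => (1/2) * mR S),
        cubeE_const, cubeE_smul]
    have step3 : cubeE (edgeFin G) p' mR
        = ∑ K : (gr A).ConnectedComponent,
            cubeE (edgeFin G) p' (fun S =>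
              if (cutEdges G (suppF A K) ∩ S).Nonempty then (1 : ℝ) else 0) := by
      rw [hmRdef]
      exact cubeE_sum (edgeFin G) p' Finset.univ _
    have step4 : ∀ K : (gr A).ConnectedComponent,
        1 - q ≤ cubeE (edgeFin G) p' (fun S =>
          if (cutEdges G (suppF A K) ∩ S).Nonempty then (1 : ℝ) else 0) := by
      intro K
      set D := cutEdges G (suppF A K) with hD
      have hDE : D ⊆ edgeFin G := by
        intro e he
        rw [hD, cutEdges, Finset.mem_filter] at he
        rw [edgeFin, Finset.mem_filter]
        exact ⟨Finset.mem_univ e, he.2.1⟩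
      have hpt : ∀ S : Finset (Sym2 V),
          (if (D ∩ S).Nonempty then (1 : ℝ) else 0)
            = 1 - (if S ∩ D = ∅ then (1 : ℝ) else 0) := by
        intro S
        by_cases h : S ∩ D = ∅
        · rw [if_pos h, if_neg]
          · norm_num
          · rw [Finset.inter_comm] at h
            rw [h]
            exact fun hne => Finset.not_nonempty_empty hne
        · rw [if_neg h, if_pos]
          · norm_num
          · rw [Finset.inter_comm]
            exact Finset.nonempty_of_ne_empty h
      have hcomp : cubeE (edgeFin G) p' (fun S =>
          if (D ∩ S).Nonempty then (1 : ℝ) else 0) = 1 - (1 - p') ^ D.card := by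
        rw [cubeE_congr (fun S _ => hpt S),
          cubeE_sub (edgeFin G) p' (fun _ => (1 : ℝ))
            (fun S => if S ∩ D = ∅ then (1 : ℝ) else 0),
          cubeE_const, cubeE_miss p' hDE]
      rw [hcomp]
      have hlamD : lam ≤ D.card := by
        apply hconn
        · obtain ⟨v, hv⟩ := Quot.exists_rep K
          exact ⟨v, Finset.mem_filter.mpr ⟨Finset.mem_univ v, hv⟩⟩
        · obtain ⟨K₂, hK₂⟩ := Fintype.exists_ne_of_one_lt_card (by omega) K
          obtain ⟨w, hw⟩ := Quot.exists_rep K₂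
          intro h
          have hws : w ∈ suppF A K := h ▸ Finset.mem_univ w
          rw [suppF, Finset.mem_filter] at hws
          exact hK₂ (by rw [← hw]; exact hws.2)
      have hle : (1 - p') ^ D.card ≤ q :=
        pow_le_pow_of_le_one (by linarith) (by linarith) hlamD
      linarith
    have step5 : (c : ℝ) * (1 - q)
        ≤ ∑ K : (gr A).ConnectedComponent,
            cubeE (edgeFin G) p' (fun S =>
              if (cutEdges G (suppF A K) ∩ S).Nonempty then (1 : ℝ) else 0) := by
      calc (c : ℝ) * (1 - q)
          = ∑ _K : (gr A).ConnectedComponent, (1 - q) := by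
            rw [Finset.sum_const, Finset.card_univ, ← hc, nsmul_eq_mul]
        _ ≤ _ := Finset.sum_le_sum (fun K _ => step4 K)
    have hcR : (2 : ℝ) ≤ (c : ℝ) := by exact_mod_cast hc2
    have hfin : ((c : ℝ) - 1) - (1/2) * ((c : ℝ) * (1 - q))
        ≤ (1 + q) / 2 * ((c : ℝ) - 1) := by nlinarith
    rw [exc, ← hc]
    calc cubeE (edgeFin G) p' (fun S => exc (A ∪ S))
        ≤ ((c : ℝ) - 1) - (1/2) * cubeE (edgeFin G) p' mR := by
          rw [← step2]; exact step1
      _ ≤ ((c : ℝ) - 1) - (1/2) * ((c : ℝ) * (1 - q)) := by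
          rw [step3]
          nlinarith [step5]
      _ ≤ (1 + q) / 2 * ((c : ℝ) - 1) := hfin


lemma iterate_rounds [Nonempty V] (G : SimpleGraph V) (lam : ℕ)
    (hconn : ∀ S : Finset V, S.Nonempty → S ≠ Finset.univ → lam ≤ (cutEdges G S).card)
    {p' : ℝ} (hp'0 : 0 ≤ p') (hp'1 : p' ≤ 1) :
    ∀ (t : ℕ) (A : Finset (Sym2 V)),
      cubeE (edgeFin G) (1 - (1 - p') ^ t) (fun S => exc (A ∪ S))
        ≤ ((1 + (1 - p') ^ lam) / 2) ^ t * exc A := by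
  classical
  intro t
  induction t with
  | zero =>
    intro A
    rw [pow_zero, sub_self, cubeE_zero_p, Finset.union_empty, pow_zero, one_mul]
  | succ t ih =>
    intro A
    set θ := (1 + (1 - p') ^ lam) / 2 with hθdef
    have hθ0 : 0 ≤ θ := by
      have : (0:ℝ) ≤ (1 - p') ^ lam := pow_nonneg (by linarith) _
      rw [hθdef]
      linarith
    have hcomb : 1 - (1 - p') ^ (t + 1)
        = p' + (1 - (1 - p') ^ t) - p' * (1 - (1 - p') ^ t) := by
      rw [pow_succ]
      ring
    rw [hcomb, cubeE_compose p' (1 - (1 - p') ^ t) (edgeFin G) (fun S => exc (A ∪ S))]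
    calc cubeE (edgeFin G) p' (fun S1 =>
            cubeE (edgeFin G) (1 - (1 - p') ^ t) (fun S2 => exc (A ∪ (S1 ∪ S2))))
        ≤ cubeE (edgeFin G) p' (fun S1 => θ ^ t * exc (A ∪ S1)) := by
          apply cubeE_mono hp'0 hp'1
          intro S1 _
          have h := ih (A ∪ S1)
          have heq : (fun S2 => exc (A ∪ (S1 ∪ S2))) = fun S2 => exc ((A ∪ S1) ∪ S2) := by
            funext S2
            rw [Finset.union_assoc]
          rw [heq]
          exact h
      _ = θ ^ t * cubeE (edgeFin G) p' (fun S1 => exc (A ∪ S1)) :=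
          cubeE_smul (edgeFin G) p' (θ ^ t) (fun S1 => exc (A ∪ S1))
      _ ≤ θ ^ t * (θ * exc A) := by
          apply mul_le_mul_of_nonneg_left _ (pow_nonneg hθ0 t)
          exact round_step G lam hconn hp'0 hp'1 A
      _ = θ ^ (t + 1) * exc A := by
          rw [pow_succ]
          ring


theorem statement0_aux {V : Type*} [Fintype V] (G : SimpleGraph V)
    (n lam : ℕ) (hn : Fintype.card V = n) (hn2 : 2 ≤ n) (hlam : 1 ≤ lam)
    (hconn : ∀ S : Finset V, S.Nonempty → S ≠ Finset.univ → lam ≤ (cutEdges G S).card)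
    (p : ℝ) (hp0 : 0 ≤ p) (hp1 : p ≤ 1)
    (hp : 20 * Real.logb 2 n / lam ≤ p) :
    1 - 1 / (n : ℝ) ≤
      cubePr (edgeFin G) p
        (fun S => (SimpleGraph.fromEdgeSet (↑S : Set (Sym2 V))).Connected) := by
  classical
  have hnV : Nonempty V := by
    rw [← Fintype.card_pos_iff, hn]
    omega
  have hnR : (2 : ℝ) ≤ (n : ℝ) := by exact_mod_cast hn2
  set L := Real.logb 2 (n : ℝ) with hLdef
  have hL1 : 1 ≤ L := by
    rw [hLdef, ← Real.logb_self_eq_one (b := 2) (by norm_num)]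
    exact Real.logb_le_logb_of_le one_lt_two (by norm_num) hnR
  set k := Nat.clog 2 n with hkdef
  have hnk : n ≤ 2 ^ k := Nat.le_pow_clog one_lt_two n
  have hk1 : 1 ≤ k := by
    by_contra h
    push_neg at h
    interval_cases k
    omega
  set T := 3 * k with hTdef
  have hT1 : 1 ≤ T := by omega
  have hTR0 : (0 : ℝ) < ((T : ℕ) : ℝ) := by
    have h0 : (0:ℕ) < T := by omega
    exact_mod_cast h0
  have hkL : (k : ℝ) ≤ L + 1 := by
    have h2 : (2:ℕ) ^ (k - 1) < n := by
      have := Nat.pow_pred_clog_lt_self (b := 2) one_lt_two (x := n) (by omega)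
      simpa [hkdef, Nat.pred_eq_sub_one] using this
    have h2R : ((2:ℝ)) ^ (k - 1) < (n : ℝ) := by exact_mod_cast h2
    have hlogb : Real.logb 2 ((2:ℝ) ^ (k - 1)) < L := by
      rw [hLdef]
      exact Real.logb_lt_logb (by norm_num) (pow_pos (by norm_num) _) h2R
    rw [Real.logb_pow, Real.logb_self_eq_one (by norm_num), mul_one] at hlogb
    have hcast : ((k - 1 : ℕ) : ℝ) = (k : ℝ) - 1 := by
      push_cast [Nat.cast_sub hk1]
      ring
    rw [hcast] at hlogb
    linarith
  have hTL : (T : ℝ) ≤ 6 * L := by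
    have hT3 : (T : ℝ) = 3 * (k : ℝ) := by
      rw [hTdef]
      push_cast
      ring
    rw [hT3]
    linarith
  set x := 1 - p with hxdef
  have hx0 : 0 ≤ x := by rw [hxdef]; linarith
  have hxle1 : x ≤ 1 := by rw [hxdef]; linarith
  set p' := 1 - x ^ ((T : ℝ)⁻¹) with hp'def
  have hxr0 : 0 ≤ x ^ ((T : ℝ)⁻¹) := Real.rpow_nonneg hx0 _
  have hxr1 : x ^ ((T : ℝ)⁻¹) ≤ 1 :=
    Real.rpow_le_one hx0 hxle1 (by positivity)
  have hp'0 : 0 ≤ p' := by rw [hp'def]; linarith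
  have hp'1 : p' ≤ 1 := by rw [hp'def]; linarith
  have h1p' : 1 - p' = x ^ ((T : ℝ)⁻¹) := by rw [hp'def]; ring
  have hpow : (1 - p') ^ T = x := by
    rw [h1p', ← Real.rpow_natCast (x ^ ((T : ℝ)⁻¹)) T, ← Real.rpow_mul hx0]
    rw [inv_mul_cancel₀ (ne_of_gt hTR0), Real.rpow_one]
  set q := (1 - p') ^ lam with hqdef
  have hq0 : 0 ≤ q := pow_nonneg (by linarith) _
  have hplam : 20 * L ≤ p * lam := by
    have hlamR : (0:ℝ) < (lam : ℝ) := by exact_mod_cast hlam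
    rw [div_le_iff₀ hlamR] at hp
    linarith [hp]
  have hq : q ≤ 1 / 20 := by
    have e0 : (0:ℝ) ≤ (T : ℝ)⁻¹ * lam := by positivity
    have hqrw : q = x ^ ((T : ℝ)⁻¹ * (lam : ℝ)) := by
      rw [hqdef, h1p', ← Real.rpow_natCast (x ^ ((T : ℝ)⁻¹)) lam, ← Real.rpow_mul hx0]
    have hxe : x ≤ Real.exp (-p) := by
      have := Real.add_one_le_exp (-p)
      rw [hxdef]
      linarith
    have h1 : q ≤ (Real.exp (-p)) ^ ((T : ℝ)⁻¹ * (lam : ℝ)) := by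
      rw [hqrw]
      exact Real.rpow_le_rpow hx0 hxe e0
    have h2 : (Real.exp (-p)) ^ ((T : ℝ)⁻¹ * (lam : ℝ))
        = Real.exp (-(p * lam / T)) := by
      rw [← Real.exp_mul]
      congr 1
      field_simp
    have h3 : -(p * lam / T) ≤ -(10 / 3 : ℝ) := by
      rw [neg_le_neg_iff]
      rw [le_div_iff₀ hTR0]
      calc (10:ℝ) / 3 * T ≤ 10 / 3 * (6 * L) := by
            apply mul_le_mul_of_nonneg_left hTL (by norm_num)
        _ = 20 * L := by ring
        _ ≤ p * lam := hplam
    have h4 : Real.exp (-(10/3 : ℝ)) ≤ 1 / 20 := by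
      have he3 : Real.exp (-(10/3 : ℝ)) ≤ Real.exp (-3) := by
        rw [Real.exp_le_exp]
        norm_num
      have hexp3 : (20 : ℝ) ≤ Real.exp 3 := by
        have h := Real.exp_one_gt_d9
        have h3e : Real.exp 3 = Real.exp 1 * Real.exp 1 * Real.exp 1 := by
          rw [← Real.exp_add, ← Real.exp_add]
          norm_num
        nlinarith
      have hneg : Real.exp (-3 : ℝ) ≤ 1 / 20 := by
        rw [Real.exp_neg, show (1/20 : ℝ) = (20:ℝ)⁻¹ by norm_num]
        exact inv_anti₀ (by norm_num) hexp3
      linarith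
    calc q ≤ Real.exp (-(p * lam / T)) := by rw [← h2]; exact h1
      _ ≤ Real.exp (-(10/3 : ℝ)) := Real.exp_le_exp.mpr h3
      _ ≤ 1 / 20 := h4
  set θ := (1 + q) / 2 with hθdef
  have hθ0 : 0 ≤ θ := by rw [hθdef]; linarith
  have hθle : θ ≤ 21 / 40 := by rw [hθdef]; linarith
  have hθT : θ ^ T ≤ 1 / (n : ℝ) ^ 2 := by
    have h1 : θ ^ T ≤ (21 / 40 : ℝ) ^ T := pow_le_pow_left₀ hθ0 hθle T
    have h2 : ((21 / 40 : ℝ)) ^ T = (((21 / 40 : ℝ)) ^ 3) ^ k := by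
      rw [hTdef, pow_mul]
    have h3 : (((21 / 40 : ℝ)) ^ 3) ^ k ≤ ((1 : ℝ) / 4) ^ k := by
      apply pow_le_pow_left₀ (by positivity) (by norm_num) k
    have hn0 : (0:ℝ) < (n : ℝ) := by linarith
    have h4 : ((1 : ℝ) / 4) ^ k ≤ 1 / (n : ℝ) ^ 2 := by
      rw [div_pow, one_pow]
      apply one_div_le_one_div_of_le (pow_pos hn0 2)
      have h2k : (n : ℝ) ≤ (2 : ℝ) ^ k := by exact_mod_cast hnk
      calc (n:ℝ) ^ 2 ≤ ((2:ℝ) ^ k) ^ 2 := by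
            apply pow_le_pow_left₀ (by positivity) h2k
        _ = (4:ℝ) ^ k := by
            rw [← pow_mul, mul_comm, pow_mul]
            norm_num
    calc θ ^ T ≤ (21/40 : ℝ) ^ T := h1
      _ = (((21 / 40 : ℝ)) ^ 3) ^ k := h2
      _ ≤ ((1 : ℝ) / 4) ^ k := h3
      _ ≤ 1 / (n : ℝ) ^ 2 := h4
  have hiter := iterate_rounds G lam hconn hp'0 hp'1 T ∅
  rw [hpow] at hiter
  have hxp : 1 - x = p := by rw [hxdef]; ring
  rw [hxp] at hiter
  have hempty : (fun S : Finset (Sym2 V) => exc (∅ ∪ S)) = exc := by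
    funext S
    rw [Finset.empty_union]
  rw [hempty] at hiter
  have hexc0 : exc (∅ : Finset (Sym2 V)) ≤ (n : ℝ) - 1 := by
    rw [exc]
    have hsurj : Function.Surjective (gr (∅ : Finset (Sym2 V))).connectedComponentMk :=
      fun b => Quot.exists_rep b
    have hcle := Fintype.card_le_of_surjective _ hsurj
    rw [hn] at hcle
    have hcleR : (Fintype.card (gr (∅ : Finset (Sym2 V))).ConnectedComponent : ℝ)
        ≤ (n : ℝ) := by exact_mod_cast hcle
    linarith
  have hexcbound : cubeE (edgeFin G) p exc ≤ 1 / (n : ℝ) := by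
    calc cubeE (edgeFin G) p exc ≤ θ ^ T * exc ∅ := hiter
      _ ≤ θ ^ T * ((n : ℝ) - 1) := by
          apply mul_le_mul_of_nonneg_left hexc0 (pow_nonneg hθ0 T)
      _ ≤ (1 / (n : ℝ) ^ 2) * ((n : ℝ) - 1) := by
          apply mul_le_mul_of_nonneg_right hθT (by linarith)
      _ ≤ 1 / (n : ℝ) := by
          have hn0 : (0:ℝ) < (n : ℝ) := by linarith
          rw [div_mul_eq_mul_div, div_le_div_iff₀ (pow_pos hn0 2) hn0]
          nlinarith
  have hpoint : ∀ S ∈ (edgeFin G).powerset,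
      1 - exc S ≤ (if (SimpleGraph.fromEdgeSet (↑S : Set (Sym2 V))).Connected
        then (1:ℝ) else 0) := by
    intro S _
    by_cases hQ : (SimpleGraph.fromEdgeSet (↑S : Set (Sym2 V))).Connected
    · rw [if_pos hQ]
      have h1 := cc_pos S
      have h1R : (1 : ℝ) ≤ (Fintype.card (gr S).ConnectedComponent : ℝ) := by
        exact_mod_cast h1
      rw [exc]
      linarith
    · rw [if_neg hQ]
      have h2 : 2 ≤ Fintype.card (gr S).ConnectedComponent := by
        rw [SimpleGraph.connected_iff] at hQ
        push_neg at hQ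
        have hpre : ¬ (gr S).Preconnected := fun h => not_isEmpty_of_nonempty V (hQ h)
        rw [SimpleGraph.Preconnected] at hpre
        push_neg at hpre
        obtain ⟨u, w, huw⟩ := hpre
        have hne : (gr S).connectedComponentMk u ≠ (gr S).connectedComponentMk w :=
          fun h => huw (SimpleGraph.ConnectedComponent.eq.mp h)
        have := Fintype.one_lt_card_iff.mpr ⟨_, _, hne⟩
        omega
      have h2R : (2 : ℝ) ≤ (Fintype.card (gr S).ConnectedComponent : ℝ) := by
        exact_mod_cast h2
      rw [exc]
      linarith
  have hfinal : cubePr (edgeFin G) p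
      (fun S => (SimpleGraph.fromEdgeSet (↑S : Set (Sym2 V))).Connected)
      = cubeE (edgeFin G) p (fun S =>
          if (SimpleGraph.fromEdgeSet (↑S : Set (Sym2 V))).Connected then (1:ℝ) else 0) := by
    unfold cubePr cubeE cubeW
    beta_reduce
    exact Finset.sum_congr rfl fun S _ => by
      congr 1
      have hi : (propDecidable (SimpleGraph.fromEdgeSet (↑S : Set (Sym2 V))).Connected)
          = (SimpleGraph.fromEdgeSet (↑S : Set (Sym2 V))).instDecidableConnected :=
        Subsingleton.elim _ _
      rw [hi]
  rw [hfinal]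
  have hlow : cubeE (edgeFin G) p (fun S => 1 - exc S)
      ≤ cubeE (edgeFin G) p (fun S =>
          if (SimpleGraph.fromEdgeSet (↑S : Set (Sym2 V))).Connected then (1:ℝ) else 0) :=
    cubeE_mono hp0 hp1 hpoint
  have heq : cubeE (edgeFin G) p (fun S => 1 - exc S)
      = 1 - cubeE (edgeFin G) p exc := by
    rw [cubeE_sub (edgeFin G) p (fun _ => (1:ℝ)) exc, cubeE_const]
  rw [heq] at hlow
  linarith

end Graph

end KargerAux

end KargerAuxDev

/-- If `G` is a `λ`-edge-connected simple graph on `n ≥ 2` vertices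
(`λ ≥ 1`), `p ∈ [0,1]` and `p ≥ 20 log₂ n / λ`, then the spanning subgraph obtained by
keeping each edge independently with probability `p` is connected with probability at
least `1 - 1/n`. -/
theorem statement0 {V : Type*} [Fintype V] (G : SimpleGraph V)
    (n lam : ℕ) (hn : Fintype.card V = n) (hn2 : 2 ≤ n) (hlam : 1 ≤ lam)
    (hconn : ∀ S : Finset V, S.Nonempty → S ≠ Finset.univ → lam ≤ (cutEdges G S).card)
    (p : ℝ) (hp0 : 0 ≤ p) (hp1 : p ≤ 1)
    (hp : 20 * Real.logb 2 n / lam ≤ p) :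
    1 - 1 / (n : ℝ) ≤
      cubePr (edgeFin G) p
        (fun S => (SimpleGraph.fromEdgeSet (↑S : Set (Sym2 V))).Connected) := by
  exact KargerAux.statement0_aux G n lam hn hn2 hlam hconn p hp0 hp1 hp
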